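/- For pairwise distinct complex numbers λ₁, λ₂, λ₃ with λ₁ + λ₂ + λ₃ = −3/2 (the case of a three-character theory with vanishing Wronskian index), the diagonal entries y_{ii} := 1728·λᵢ(λᵢ + 1/3)(λᵢ + 2/3)/∏_{j≠i}(λᵢ − λⱼ) − 744·λᵢ satisfy y₁₁ + y₂₂ + y₃₃ = 252. -/

import Mathlib

theorem trace_Y_wronskian_zero (l1 l2 l3 : ℂ)
    (h12 : l1 ≠ l2) (h13 : l1 ≠ l3) (h23 : l2 ≠ l3)
    (hsum : l1 + l2 + l3 = -(3/2)) :
    (1728 * (l1 * (l1 + 1/3) * (l1 + 2/3)) / ((l1 - l2) * (l1 - l3)) - 744 * l1) +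
    (1728 * (l2 * (l2 + 1/3) * (l2 + 2/3)) / ((l2 - l1) * (l2 - l3)) - 744 * l2) +
    (1728 * (l3 * (l3 + 1/3) * (l3 + 2/3)) / ((l3 - l1) * (l3 - l2)) - 744 * l3) =
      252 := by
  have a : l1 - l2 ≠ 0 := sub_ne_zero.mpr h12
  have b : l1 - l3 ≠ 0 := sub_ne_zero.mpr h13
  have c : l2 - l3 ≠ 0 := sub_ne_zero.mpr h23
  have a' : l2 - l1 ≠ 0 := sub_ne_zero.mpr h12.symm
  have b' : l3 - l1 ≠ 0 := sub_ne_zero.mpr h13.symm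
  have c' : l3 - l2 ≠ 0 := sub_ne_zero.mpr h23.symm
  have hD : (3 * 3 * ((l1 - l2) * (l1 - l3)) * (3 * 3 * ((l2 - l1) * (l2 - l3))) *
      (3 * 3 * ((l3 - l1) * (l3 - l2)))) ≠ 0 := by
    apply mul_ne_zero
    apply mul_ne_zero
    · exact mul_ne_zero (by norm_num) (mul_ne_zero a b)
    · exact mul_ne_zero (by norm_num) (mul_ne_zero a' c)
    · exact mul_ne_zero (by norm_num) (mul_ne_zero b' c')
  field_simp
  linear_combination (-8856 * ((l1 - l2) * (l1 - l3) * (l2 - l3))^2) * hsum
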